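/- Let p be an odd prime and let G be a finite p-group of nilpotency class two with G' = Z(G). Let Δ be a bilinear form on G with associated circle operation x ∘ y = x·y·Δ(x, y). Then Δ is symmetric if and only if there exists a bijection θ: G → G such that θ(x·y) = θ(x) ∘ θ(y) for all x, y ∈ G, θ(x)·x⁻¹ ∈ G' for all x ∈ G, and θ(z) = z for all z ∈ G' (i.e., an isomorphism G → (G, ∘) inducing the identity on G/G' and on G'). -/

import Mathlib

/-- The commutator `[x, y] = x⁻¹ * y⁻¹ * x * y` in the paper's convention. -/
def pcomm {G : Type*} [Group G] (x y : G) : G := x⁻¹ * y⁻¹ * x * y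

open scoped commutatorElement in
theorem pcomm_mem_commutator {G : Type*} [Group G] (x y : G) :
    pcomm x y ∈ commutator G := by
  have h : pcomm x y = ⁅x⁻¹, y⁻¹⁆ := by
    simp [pcomm, commutatorElement_def, mul_assoc]
  rw [h, commutator]
  exact Subgroup.commutator_mem_commutator (Subgroup.mem_top _) (Subgroup.mem_top _)

/-- A bilinear form on a group `G` of class two with `G' = Z(G)`: a map
`Δ : G/G' × G/G' → G'` which is multiplicative in each variable. -/
def IsBilinearForm {G : Type*} [Group G] (Δ : G → G → G) : Prop :=
  (∀ x y : G, Δ x y ∈ commutator G) ∧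
  (∀ x y w : G, w ∈ commutator G → Δ (x * w) y = Δ x y) ∧
  (∀ x y w : G, w ∈ commutator G → Δ x (y * w) = Δ x y) ∧
  (∀ x₁ x₂ y : G, Δ (x₁ * x₂) y = Δ x₁ y * Δ x₂ y) ∧
  (∀ x y₁ y₂ : G, Δ x (y₁ * y₂) = Δ x y₁ * Δ x y₂)

/-- The circle operation `x ∘ y = x·y·Δ(x, y)` associated to a bilinear form `Δ`. -/
def circ {G : Type*} [Group G] (Δ : G → G → G) (x y : G) : G := x * y * Δ x y

/-- The circle inverse `x^{⊖1} = x⁻¹·Δ(x, x)`. -/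
def oinv {G : Type*} [Group G] (Δ : G → G → G) (x : G) : G := x⁻¹ * Δ x x

/-- The circle commutator `[x, y]_∘ = x^{⊖1} ∘ y^{⊖1} ∘ x ∘ y`. -/
def ocomm {G : Type*} [Group G] (Δ : G → G → G) (x y : G) : G :=
  circ Δ (circ Δ (circ Δ (oinv Δ x) (oinv Δ y)) x) y

/-- a bilinear form `Δ` on `G` is symmetric if and only if there is an
isomorphism `θ : G → (G, ∘)` which induces the identity on `G/G'` and on `G'`. -/
theorem stmt_17 {p : ℕ} (hp : p.Prime) (hodd : Odd p)
    {G : Type*} [Group G] [Fintype G] (hpG : IsPGroup p G)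
    (hc2 : (⊤ : Subgroup G).lowerCentralSeries 2 = ⊥) (hc1 : (⊤ : Subgroup G).lowerCentralSeries 1 ≠ ⊥)
    (hGZ : commutator G = Subgroup.center G)
    (Δ : G → G → G) (hΔ : IsBilinearForm Δ) :
    (∀ x y : G, Δ y x = Δ x y) ↔
      ∃ θ : G → G, Function.Bijective θ ∧
        (∀ x y : G, θ (x * y) = circ Δ (θ x) (θ y)) ∧
        (∀ x : G, θ x * x⁻¹ ∈ commutator G) ∧
        (∀ z : G, z ∈ commutator G → θ z = z) := by
  obtain ⟨hmem, hlw, hrw, hladd, hradd⟩ := hΔ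
  -- every element of the commutator subgroup is central
  have hwc : ∀ w : G, w ∈ commutator G → ∀ g : G, g * w = w * g :=
    fun w hw g => Subgroup.mem_center_iff.mp (hGZ ▸ hw) g
  have hΔr1 : ∀ x : G, Δ x 1 = 1 := by
    intro x
    have h := hradd x 1 1
    rw [one_mul] at h
    exact left_eq_mul.mp h
  have hΔw1 : ∀ x w : G, w ∈ commutator G → Δ x w = 1 := by
    intro x w hw
    have h := hrw x 1 w hw
    rw [one_mul] at h
    rw [h]
    exact hΔr1 x
  constructor
  · -- symmetric → exists θ
    intro hsym
    haveI : Fact p.Prime := ⟨hp⟩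
    obtain ⟨n, hn⟩ := (IsPGroup.iff_card (p := p) (G := G)).mp hpG
    have hcardodd : Odd (Fintype.card G) := by
      rw [← Nat.card_eq_fintype_card, hn]; exact hodd.pow
    obtain ⟨m, hm⟩ := hcardodd
    set k := m + 1 with hk
    have hpow : ∀ g : G, g ^ (2 * k) = g := by
      intro g
      have h2k : 2 * k = Fintype.card G + 1 := by omega
      rw [h2k, pow_succ, pow_card_eq_one, one_mul]
    have hpm : ∀ x : G, (Δ x x) ^ k ∈ commutator G := fun x => pow_mem (hmem x x) k
    refine ⟨fun x => x * (Δ x x) ^ k, ?_, ?_, ?_, ?_⟩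
    · -- bijective
      rw [← Finite.injective_iff_bijective]
      intro x y h
      simp only at h
      have hmw : (Δ x x) ^ k * ((Δ y y) ^ k)⁻¹ ∈ commutator G :=
        mul_mem (hpm x) (inv_mem (hpm y))
      have hw : y = x * ((Δ x x) ^ k * ((Δ y y) ^ k)⁻¹) := by
        rw [← mul_assoc, h, mul_inv_cancel_right]
      have h1 : Δ y y = Δ x x := by
        conv_lhs => rw [hw]
        rw [hlw _ _ _ hmw, hrw _ _ _ hmw]
      rw [h1] at h
      exact mul_right_cancel h
    · -- multiplicative
      intro x y
      simp only [circ]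
      have hΔeq : Δ (x * (Δ x x) ^ k) (y * (Δ y y) ^ k) = Δ x y := by
        rw [hlw _ _ _ (hpm x), hrw _ _ _ (hpm y)]
      rw [hΔeq]
      have e1 : Δ (x * y) (x * y) = Δ x x * Δ y y * (Δ x y * Δ x y) := by
        rw [hladd, hradd, hradd, hsym x y]
        rw [mul_assoc (Δ x x), ← mul_assoc (Δ x y) (Δ x y),
          hwc _ (hmem y y) (Δ x y * Δ x y), ← mul_assoc (Δ x x)]
      have e2 : (Δ (x * y) (x * y)) ^ k
          = (Δ x x) ^ k * (Δ y y) ^ k * Δ x y := by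
        rw [e1]
        have c1 : Commute (Δ x x * Δ y y) (Δ x y * Δ x y) :=
          (hwc _ (mul_mem (hmem x y) (hmem x y)) (Δ x x * Δ y y))
        have c2 : Commute (Δ x x) (Δ y y) := (hwc _ (hmem y y) (Δ x x))
        rw [c1.mul_pow, c2.mul_pow, ← sq, ← pow_mul, mul_comm 2 k]
        rw [mul_comm k 2, hpow]
      rw [e2]
      -- now: x * y * ((Δ x x)^k * (Δ y y)^k * Δ x y)
      --    = x * (Δ x x)^k * (y * (Δ y y)^k) * Δ x y
      have e3 : x * (Δ x x) ^ k * (y * (Δ y y) ^ k)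
          = x * y * ((Δ x x) ^ k * (Δ y y) ^ k) := by
        rw [mul_assoc x ((Δ x x) ^ k), ← mul_assoc ((Δ x x) ^ k) y,
          ← hwc _ (hpm x) y, mul_assoc y, ← mul_assoc]
      rw [e3]
      simp only [mul_assoc]
    · -- induces identity on G/G'
      intro x
      simp only
      rw [mul_assoc, ← hwc _ (hpm x) x⁻¹, mul_inv_cancel_left]
      exact hpm x
    · -- fixes G'
      intro z hz
      simp only
      rw [hΔw1 z z hz, one_pow, mul_one]
  · -- exists θ → symmetric
    rintro ⟨θ, hbij, hmul, hmod, hfix⟩ x y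
    set c := pcomm x y with hcdef
    have hcmem : c ∈ commutator G := pcomm_mem_commutator x y
    have hxy : x * y = y * x * c := by
      simp only [hcdef, pcomm]
      group
    set u := θ x * x⁻¹ with hu
    set v := θ y * y⁻¹ with hv
    have humem : u ∈ commutator G := hmod x
    have hvmem : v ∈ commutator G := hmod y
    have hθx : θ x = x * u := by
      rw [hwc _ humem x, hu, inv_mul_cancel_right]
    have hθy : θ y = y * v := by
      rw [hwc _ hvmem y, hv, inv_mul_cancel_right]
    have ea : θ x * θ y = x * y * (u * v) := by
      rw [hθx, hθy, mul_assoc x u, ← mul_assoc u y, ← hwc _ humem y,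
        mul_assoc y u, ← mul_assoc]
    have eb : θ y * θ x = y * x * (u * v) := by
      rw [hθx, hθy, mul_assoc y v, ← mul_assoc v x, ← hwc _ hvmem x,
        mul_assoc x v, ← mul_assoc]
      -- goal: y * (x * (v * u)) = y * x * (u * v)
      rw [← hwc _ hvmem u, ← mul_assoc]
    have hΔθ1 : Δ (θ x) (θ y) = Δ x y := by
      rw [hθx, hθy, hlw _ _ _ humem, hrw _ _ _ hvmem]
    have hΔθ2 : Δ (θ y) (θ x) = Δ y x := by
      rw [hθx, hθy, hlw _ _ _ hvmem, hrw _ _ _ humem]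
    have h1 : θ (x * y) = x * y * (u * v) * Δ x y := by
      rw [hmul x y]
      simp only [circ]
      rw [hΔθ1, ea]
    have h2 : θ (x * y) = x * y * (u * v) * Δ y x := by
      have step : θ (x * y) = θ (y * x) * c := by
        rw [hxy, hmul (y * x) c]
        simp only [circ]
        rw [hfix c hcmem, hΔw1 _ _ hcmem, mul_one]
      rw [step, hmul y x]
      simp only [circ]
      rw [hΔθ2, eb]
      -- goal: y * x * (u * v) * Δ y x * c = x * y * (u * v) * Δ y x
      rw [mul_assoc (y * x * (u * v)), hwc _ hcmem (Δ y x), ← mul_assoc,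
        mul_assoc (y * x) (u * v) c, hwc _ hcmem (u * v), ← mul_assoc, ← hxy]
    have := h1.symm.trans h2
    exact (mul_left_cancel this).symm
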